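/- Let C ⊆ ℝ^d be a nonempty closed convex set, let f : ℝ^d → ℝ be convex and differentiable with L-Lipschitz continuous gradient (L > 0), with finite infimum f* = inf_{y ∈ ℝ^d} f(y), and suppose the solution set S = argmin_{y ∈ C} f(y) is nonempty. Assume f is μ-restricted strongly convex on C: f(y) - f(P_S y) ≥ (μ/2)‖y - P_S y‖² for all y ∈ C, with 0 < μ < 4LM. Fix x ∈ C and let H : Ω → ℝ^d be measurable with E[H] = ∇f(x) and E[‖H‖²] ≤ M‖∇f(x)‖² + σ² for constants M > 0 and σ ∈ ℝ. Let 0 < γ ≤ 1/(2LM), set ρ = γμ(1 - γLM) and σ₁² = σ² + 2LM(min_{y ∈ C} f(y) - f*). Then the random point x⁺ = P_C(x - γH) satisfies E[‖x⁺ - P_S x⁺‖²] ≤ (1 - ρ)‖x - P_S x‖² + γ²σ₁². (One-step form of Theorem 2 for the projected stochastic gradient method with constant step-size.) -/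

import Mathlib

open MeasureTheory
open scoped RealInnerProductSpace

section Aux
variable {E : Type*} [NormedAddCommGroup E] [InnerProductSpace ℝ E] [CompleteSpace E]

/-- variational inequality for a nearest point on a convex set -/
lemma var_ineq {K : Set E} (hK : Convex ℝ K) {u p : E} (hp : p ∈ K)
    (hmin : ∀ z ∈ K, ‖u - p‖ ≤ ‖u - z‖) {w : E} (hw : w ∈ K) :
    ⟪u - p, w - p⟫ ≤ 0 := by
  haveI : Nonempty K := ⟨⟨p, hp⟩⟩
  have heq : ‖u - p‖ = ⨅ w : K, ‖u - w‖ := by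
    refine le_antisymm (le_ciInf fun w => hmin w w.2) ?_
    exact ciInf_le ⟨0, fun _ ⟨_, h⟩ => h ▸ norm_nonneg _⟩ (⟨p, hp⟩ : K)
  exact (norm_eq_iInf_iff_real_inner_le_zero hK hp).1 heq w hw

lemma proj_contract_sq {K : Set E} (hK : Convex ℝ K) {u p s : E} (hp : p ∈ K)
    (hmin : ∀ z ∈ K, ‖u - p‖ ≤ ‖u - z‖) (hs : s ∈ K) :
    ‖p - s‖ ^ 2 ≤ ‖u - s‖ ^ 2 := by
  have h1 : ⟪u - p, s - p⟫ ≤ 0 := var_ineq hK hp hmin hs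
  have h2 : ‖u - s‖ ^ 2 = ‖u - p‖ ^ 2 + 2 * ⟪u - p, p - s⟫ + ‖p - s‖ ^ 2 := by
    have : u - s = (u - p) + (p - s) := by abel
    rw [this, norm_add_sq_real]
  have h3 : ⟪u - p, p - s⟫ = -⟪u - p, s - p⟫ := by
    rw [← inner_neg_right]; congr 1; abel
  nlinarith [sq_nonneg ‖u - p‖]

/-- first-order condition for convex differentiable functions -/
lemma grad_ineq {f : E → ℝ} (hfconv : ConvexOn ℝ Set.univ f)
    (hfdiff : Differentiable ℝ f) (x y : E) :
    f x + ⟪gradient f x, y - x⟫ ≤ f y := by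
  set v := y - x with hv
  have hderiv : ∀ t : ℝ, HasDerivAt (fun t : ℝ => f (x + t • v))
      ⟪gradient f (x + t • v), v⟫ t := by
    intro t
    have hc : HasDerivAt (fun t : ℝ => x + t • v) v t := by
      simpa using ((hasDerivAt_id t).smul_const v).const_add x
    have hF := (hfdiff (x + t • v)).hasGradientAt
    rw [hasGradientAt_iff_hasFDerivAt] at hF
    have := hF.comp_hasDerivAt t hc
    simp [InnerProductSpace.toDual_apply_apply] at this ⊢
    exact this
  have hgconv : ConvexOn ℝ Set.univ (fun t : ℝ => f (x + t • v)) := by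
    have h := hfconv.comp_affineMap (AffineMap.lineMap x y)
    simp only [Set.preimage_univ] at h
    have heq : (fun t : ℝ => f (x + t • v)) = f ∘ (AffineMap.lineMap x y) := by
      funext t
      simp only [Function.comp_apply, AffineMap.lineMap_apply, vsub_eq_sub, vadd_eq_add, hv]
      congr 1
      abel
    rw [heq]
    exact h
  have hs := hgconv.le_slope_of_hasDerivAt (Set.mem_univ (0:ℝ)) (Set.mem_univ (1:ℝ))
    zero_lt_one (hderiv 0)
  have h0 : x + (0:ℝ) • v = x := by simp
  have h1 : x + (1:ℝ) • v = y := by simp [hv]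
  rw [slope_def_field] at hs
  simp only [h0, h1] at hs
  have : ⟪gradient f x, v⟫ ≤ f y - f x := by
    simpa [div_one] using hs
  linarith

/-- descent lemma for L-Lipschitz gradient -/
lemma descent_lemma {f : E → ℝ} (hfdiff : Differentiable ℝ f) {L : ℝ} (hL : 0 < L)
    (hLip : ∀ y z, ‖gradient f y - gradient f z‖ ≤ L * ‖y - z‖) (x v : E) :
    f (x + v) ≤ f x + ⟪gradient f x, v⟫ + L / 2 * ‖v‖ ^ 2 := by
  set ψ : ℝ → ℝ := fun t => f (x + t • v) - t * ⟪gradient f x, v⟫ - L * ‖v‖ ^ 2 / 2 * t ^ 2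
    with hψdef
  have hderiv : ∀ t : ℝ, HasDerivAt ψ
      (⟪gradient f (x + t • v), v⟫ - ⟪gradient f x, v⟫ - L * ‖v‖ ^ 2 * t) t := by
    intro t
    have hc : HasDerivAt (fun t : ℝ => x + t • v) v t := by
      simpa using ((hasDerivAt_id t).smul_const v).const_add x
    have hF := (hfdiff (x + t • v)).hasGradientAt
    rw [hasGradientAt_iff_hasFDerivAt] at hF
    have h1 : HasDerivAt (fun t : ℝ => f (x + t • v)) ⟪gradient f (x + t • v), v⟫ t := by
      have := hF.comp_hasDerivAt t hc
      simp [InnerProductSpace.toDual_apply_apply] at this ⊢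
      exact this
    have h2 : HasDerivAt (fun t : ℝ => t * ⟪gradient f x, v⟫) ⟪gradient f x, v⟫ t := by
      simpa using (hasDerivAt_id t).mul_const ⟪gradient f x, v⟫
    have h3 : HasDerivAt (fun t : ℝ => L * ‖v‖ ^ 2 / 2 * t ^ 2) (L * ‖v‖ ^ 2 * t) t := by
      have := (hasDerivAt_pow 2 t).const_mul (L * ‖v‖ ^ 2 / 2)
      exact this.congr_deriv (by norm_num; ring)
    exact (h1.sub h2).sub h3
  have hanti : AntitoneOn ψ (Set.Icc 0 1) := by
    apply antitoneOn_of_deriv_nonpos (convex_Icc 0 1)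
    · exact Continuous.continuousOn
        (continuous_iff_continuousAt.2 fun t => (hderiv t).continuousAt)
    · intro t ht
      exact (hderiv t).differentiableAt.differentiableWithinAt
    · intro t ht
      rw [interior_Icc] at ht
      rw [(hderiv t).deriv]
      have hinner : ⟪gradient f (x + t • v), v⟫ - ⟪gradient f x, v⟫
          = ⟪gradient f (x + t • v) - gradient f x, v⟫ := (inner_sub_left _ _ _).symm
      have hb : ⟪gradient f (x + t • v) - gradient f x, v⟫
          ≤ ‖gradient f (x + t • v) - gradient f x‖ * ‖v‖ := real_inner_le_norm _ _
      have hlip := hLip (x + t • v) x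
      have hnorm : ‖x + t • v - x‖ = t * ‖v‖ := by
        simp [norm_smul, abs_of_pos ht.1]
      rw [hnorm] at hlip
      have hvnn : (0:ℝ) ≤ ‖v‖ := norm_nonneg _
      nlinarith [mul_le_mul_of_nonneg_right hlip hvnn]
  have hfin := hanti (Set.mem_Icc.2 ⟨le_refl 0, zero_le_one⟩)
    (Set.mem_Icc.2 ⟨zero_le_one, le_refl 1⟩) zero_le_one
  have hψ0 : ψ 0 = f x := by simp [hψdef]
  have hψ1 : ψ 1 = f (x + v) - ⟪gradient f x, v⟫ - L * ‖v‖ ^ 2 / 2 := by simp [hψdef]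
  rw [hψ0, hψ1] at hfin
  linarith

lemma grad_sq_le {f : E → ℝ} (hfdiff : Differentiable ℝ f) {L : ℝ} (hL : 0 < L)
    (hLip : ∀ y z, ‖gradient f y - gradient f z‖ ≤ L * ‖y - z‖)
    (hbdd : BddBelow (Set.range f)) (x : E) :
    ‖gradient f x‖ ^ 2 ≤ 2 * L * (f x - ⨅ y, f y) := by
  set g := gradient f x
  have hdesc := descent_lemma hfdiff hL hLip x (-(L⁻¹ • g))
  have h1 : ⟪g, -(L⁻¹ • g)⟫ = -(L⁻¹ * ‖g‖ ^ 2) := by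
    rw [inner_neg_right, real_inner_smul_right, real_inner_self_eq_norm_sq]
  have h2 : ‖-(L⁻¹ • g)‖ ^ 2 = L⁻¹ ^ 2 * ‖g‖ ^ 2 := by
    rw [norm_neg, norm_smul]
    simp [abs_of_pos (inv_pos.2 hL), mul_pow]
  rw [h1, h2] at hdesc
  have hinf : (⨅ y, f y) ≤ f (x + -(L⁻¹ • g)) := ciInf_le hbdd _
  have hLne : L ≠ 0 := ne_of_gt hL
  have hLA : L * L⁻¹ = 1 := mul_inv_cancel₀ hLne
  have hcomb := le_trans hinf hdesc
  have h2L : (0:ℝ) < 2 * L := by linarith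
  have key : L⁻¹ * ‖g‖ ^ 2 - L / 2 * (L⁻¹ ^ 2 * ‖g‖ ^ 2) = ‖g‖ ^ 2 / (2 * L) := by
    field_simp
    ring
  have hstep : ‖g‖ ^ 2 / (2 * L) ≤ f x - ⨅ y, f y := by linarith
  rw [div_le_iff₀ h2L] at hstep
  linarith

end Aux

set_option maxHeartbeats 1000000 in
theorem stmt_2 {d : ℕ} {Ω : Type*} [MeasurableSpace Ω] (P : Measure Ω)
    [IsProbabilityMeasure P]
    (C : Set (EuclideanSpace ℝ (Fin d))) (hCne : C.Nonempty) (hCclosed : IsClosed C)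
    (hCconv : Convex ℝ C)
    (f : EuclideanSpace ℝ (Fin d) → ℝ) (hfconv : ConvexOn ℝ Set.univ f)
    (hfdiff : Differentiable ℝ f)
    (L : ℝ) (hL : 0 < L)
    (hLip : ∀ y z, ‖gradient f y - gradient f z‖ ≤ L * ‖y - z‖)
    (hbdd : BddBelow (Set.range f))
    (S : Set (EuclideanSpace ℝ (Fin d)))
    (hS : S = {y | y ∈ C ∧ ∀ z ∈ C, f y ≤ f z}) (hSne : S.Nonempty)
    (projC : EuclideanSpace ℝ (Fin d) → EuclideanSpace ℝ (Fin d))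
    (hprojC : ∀ y, projC y ∈ C ∧ ∀ z ∈ C, ‖y - projC y‖ ≤ ‖y - z‖)
    (projS : EuclideanSpace ℝ (Fin d) → EuclideanSpace ℝ (Fin d))
    (hprojS : ∀ y, projS y ∈ S ∧ ∀ z ∈ S, ‖y - projS y‖ ≤ ‖y - z‖)
    (μ M σ : ℝ) (hM : 0 < M) (hμ : 0 < μ) (hμM : μ < 4 * L * M)
    (hrsc : ∀ y ∈ C, f y - f (projS y) ≥ μ / 2 * ‖y - projS y‖ ^ 2)
    (x : EuclideanSpace ℝ (Fin d)) (hx : x ∈ C)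
    (H : Ω → EuclideanSpace ℝ (Fin d)) (hHmeas : Measurable H)
    (hHint : Integrable H P) (hHL2 : Integrable (fun a => ‖H a‖ ^ 2) P)
    (hunbiased : ∫ a, H a ∂P = gradient f x)
    (hwgc : ∫ a, ‖H a‖ ^ 2 ∂P ≤ M * ‖gradient f x‖ ^ 2 + σ ^ 2)
    (γ : ℝ) (hγ : 0 < γ) (hγle : γ ≤ 1 / (2 * L * M))
    (ρ : ℝ) (hρ : ρ = γ * μ * (1 - γ * L * M))
    (s : EuclideanSpace ℝ (Fin d)) (hs : s ∈ S)
    (σ1sq : ℝ) (hσ1 : σ1sq = σ ^ 2 + 2 * L * M * (f s - ⨅ y, f y)) :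
    ∫ a, ‖projC (x - γ • H a) - projS (projC (x - γ • H a))‖ ^ 2 ∂P ≤
      (1 - ρ) * ‖x - projS x‖ ^ 2 + γ ^ 2 * σ1sq := by
  -- basic facts about the minimizer `projS x`
  have hxS : projS x ∈ S := (hprojS x).1
  have hxS' : projS x ∈ C ∧ ∀ z ∈ C, f (projS x) ≤ f z := by rwa [hS] at hxS
  have hsS' : s ∈ C ∧ ∀ z ∈ C, f s ≤ f z := by rwa [hS] at hs
  set xs := projS x with hxsdef
  set u := x - xs with hudef
  set G := gradient f x with hGdef
  -- the comparison function
  set g : Ω → ℝ := fun a => ‖u‖ ^ 2 - 2 * γ * ⟪u, H a⟫ + γ ^ 2 * ‖H a‖ ^ 2 with hgdef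
  have hI1 : Integrable (fun a => ‖u‖ ^ 2 - 2 * γ * ⟪u, H a⟫) P :=
    (integrable_const _).sub ((hHint.const_inner u).const_mul (2 * γ))
  have hI2 : Integrable (fun a => γ ^ 2 * ‖H a‖ ^ 2) P := hHL2.const_mul (γ ^ 2)
  have hgint : Integrable g P := hI1.add hI2
  -- pointwise bound
  have hpw : ∀ a : Ω, ‖projC (x - γ • H a) - projS (projC (x - γ • H a))‖ ^ 2 ≤ g a := by
    intro a
    set w := x - γ • H a with hwdef
    set p := projC w with hpdef
    have step1 : ‖p - projS p‖ ≤ ‖p - xs‖ := (hprojS p).2 xs hxS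
    have step1' : ‖p - projS p‖ ^ 2 ≤ ‖p - xs‖ ^ 2 :=
      pow_le_pow_left₀ (norm_nonneg _) step1 2
    have step2 : ‖p - xs‖ ^ 2 ≤ ‖w - xs‖ ^ 2 :=
      proj_contract_sq hCconv (hprojC w).1 (hprojC w).2 hxS'.1
    have step3 : ‖w - xs‖ ^ 2 = g a := by
      have hrw : w - xs = u - γ • H a := by rw [hwdef, hudef]; abel
      rw [hrw, norm_sub_sq_real, real_inner_smul_right, norm_smul]
      simp only [hgdef, Real.norm_eq_abs, mul_pow, sq_abs]
      ring
    calc ‖p - projS p‖ ^ 2 ≤ ‖p - xs‖ ^ 2 := step1'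
      _ ≤ ‖w - xs‖ ^ 2 := step2
      _ = g a := step3
  have hmono : ∫ a, ‖projC (x - γ • H a) - projS (projC (x - γ • H a))‖ ^ 2 ∂P
      ≤ ∫ a, g a ∂P :=
    integral_mono_of_nonneg (Filter.Eventually.of_forall fun a => sq_nonneg _) hgint
      (Filter.Eventually.of_forall hpw)
  -- compute the integral of g
  have hgval : ∫ a, g a ∂P = ‖u‖ ^ 2 - 2 * γ * ⟪u, G⟫ + γ ^ 2 * ∫ a, ‖H a‖ ^ 2 ∂P := by
    rw [hgdef]
    rw [integral_add hI1 hI2]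
    rw [integral_sub (integrable_const (‖u‖ ^ 2)) ((hHint.const_inner u).const_mul (2 * γ))]
    rw [integral_const_mul, integral_const_mul, integral_inner hHint, hunbiased]
    simp [measure_univ]
  -- arithmetic facts
  have ha : f x - f xs ≤ ⟪u, G⟫ := by
    have := grad_ineq hfconv hfdiff x xs
    have hswap : ⟪G, xs - x⟫ = -⟪u, G⟫ := by
      rw [real_inner_comm, hudef, ← inner_neg_left]
      congr 1
      abel
    rw [hswap] at this
    linarith
  have hGsq : ‖G‖ ^ 2 ≤ 2 * L * (f x - ⨅ y, f y) := grad_sq_le hfdiff hL hLip hbdd x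
  have hfs : f xs = f s := le_antisymm (hxS'.2 s hsS'.1) (hsS'.2 xs hxS'.1)
  have hDpos : 0 ≤ f x - f xs := by linarith [hxS'.2 x hx]
  have hrscx : f x - f xs ≥ μ / 2 * ‖u‖ ^ 2 := by
    have := hrsc x hx
    rwa [← hxsdef, ← hudef] at this
  have hsInf : (⨅ y, f y) ≤ f s := ciInf_le hbdd s
  have hγLM : γ * (2 * L * M) ≤ 1 := by
    have h2LM : (0:ℝ) < 2 * L * M := by positivity
    rwa [le_div_iff₀ h2LM] at hγle
  -- put it all together
  set D := f x - f xs with hDdef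
  set Ist := (⨅ y, f y) with hIdef
  have hN : ∫ a, ‖H a‖ ^ 2 ∂P ≤ M * ‖G‖ ^ 2 + σ ^ 2 := hwgc
  have hNbound : ∫ a, ‖H a‖ ^ 2 ∂P ≤ 2 * L * M * D + 2 * L * M * (f s - Ist) + σ ^ 2 := by
    have hMG : M * ‖G‖ ^ 2 ≤ M * (2 * L * (f x - Ist)) :=
      mul_le_mul_of_nonneg_left hGsq hM.le
    have hfx : f x - Ist = D + (f s - Ist) := by rw [hDdef, hfs]; ring
    nlinarith [hN, hMG]
  have hγ2 : (0:ℝ) ≤ γ ^ 2 := sq_nonneg γ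
  have t1 : γ ^ 2 * ∫ a, ‖H a‖ ^ 2 ∂P
      ≤ γ ^ 2 * (2 * L * M * D + 2 * L * M * (f s - Ist) + σ ^ 2) :=
    mul_le_mul_of_nonneg_left hNbound hγ2
  have t2 : -(2 * γ) * ⟪u, G⟫ ≤ -(2 * γ) * D := by nlinarith [ha, hγ]
  have hcoef : 0 ≤ 2 * γ - 2 * γ ^ 2 * L * M := by nlinarith [mul_le_mul_of_nonneg_left hγLM hγ.le]
  have t3 : (2 * γ - 2 * γ ^ 2 * L * M) * (μ / 2 * ‖u‖ ^ 2)
      ≤ (2 * γ - 2 * γ ^ 2 * L * M) * D := mul_le_mul_of_nonneg_left hrscx hcoef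
  rw [hgval] at hmono
  calc ∫ a, ‖projC (x - γ • H a) - projS (projC (x - γ • H a))‖ ^ 2 ∂P
      ≤ ‖u‖ ^ 2 - 2 * γ * ⟪u, G⟫ + γ ^ 2 * ∫ a, ‖H a‖ ^ 2 ∂P := hmono
    _ ≤ (1 - ρ) * ‖u‖ ^ 2 + γ ^ 2 * σ1sq := by
        rw [hρ, hσ1]
        nlinarith [t1, t2, t3]
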